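/- Let K be a category with the amalgamation property and let u be a Fraïssé sequence of regular length κ in K. Then for every continuous inductive sequence x of length ≤ κ in K there exist a nondecreasing map α from the length of x into κ and arrows f_ξ : x_ξ → u_{α(ξ)} such that u_{α(ξ)}^{α(η)}∘f_ξ = f_η∘x_ξ^η for all ξ ≤ η below the length of x (i.e., there is a morphism of sequences from x to u). -/

import Mathlib

open CategoryTheory

universe w v u

/-- The index set of ordinals below `κ`, used to index inductive sequences of length `κ`. -/
abbrev Idx (κ : Ordinal.{w}) : Type (w + 1) := {ξ : Ordinal.{w} // ξ < κ}

/-- An inductive sequence indexed by a preorder `I` is a Fraïssé sequence if it is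
cofinal (U) and has the amalgamation property (A). -/
def IsFraisseSeq {C : Type u} [Category.{v} C] {I : Type*} [Preorder I] (F : I ⥤ C) : Prop :=
  (∀ x : C, ∃ ξ : I, Nonempty (x ⟶ F.obj ξ)) ∧
  (∀ (ξ : I) (y : C) (f : F.obj ξ ⟶ y),
    ∃ (η : I) (h : ξ ≤ η) (g : y ⟶ F.obj η), f ≫ g = F.map (homOfLE h))

/-- The amalgamation property of a category. -/
def AmalgProp (C : Type u) [Category.{v} C] : Prop :=
  ∀ (a b c : C) (f : a ⟶ b) (g : a ⟶ c),
    ∃ (d : C) (f' : b ⟶ d) (g' : c ⟶ d), f ≫ f' = g ≫ g'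

/-- A sequence of length `μ` is continuous if at every limit ordinal `δ < μ` the object
`x_δ`, together with the arrows `x_ξ^δ` (`ξ < δ`), is a colimit of the restriction of the
sequence to `δ`. -/
def IsContinuousSeq {C : Type u} [Category.{v} C] {μ : Ordinal.{w}} (x : Idx μ ⥤ C) : Prop :=
  ∀ δ : Idx μ, Order.IsSuccLimit δ.1 →
    ∀ (y : C) (g : ∀ ξ : Idx μ, ξ < δ → (x.obj ξ ⟶ y)),
      (∀ (ξ η : Idx μ) (hξ : ξ < δ) (hη : η < δ) (h : ξ ≤ η),
        x.map (homOfLE h) ≫ g η hη = g ξ hξ) →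
      ∃! h : x.obj δ ⟶ y, ∀ (ξ : Idx μ) (hξ : ξ < δ),
        x.map (homOfLE hξ.le) ≫ h = g ξ hξ

section Aux
open Ordinal

variable {C : Type u} [Category.{v} C] {κ : Cardinal.{w}} {μ : Ordinal.{w}}
  (u : Idx κ.ord ⥤ C) (x : Idx μ ⥤ C)

structure PartFam where
  dom : Ordinal.{w}
  hdom : dom ≤ μ
  g : ∀ ζ : Idx μ, ζ.1 < dom → Σ a : Idx κ.ord, (x.obj ζ ⟶ u.obj a)
  mono : ∀ (ζ η : Idx μ) (hζ : ζ.1 < dom) (hη : η.1 < dom), ζ ≤ η → (g ζ hζ).1 ≤ (g η hη).1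
  coh : ∀ (ζ η : Idx μ) (hζ : ζ.1 < dom) (hη : η.1 < dom) (h : ζ ≤ η)
    (hab : (g ζ hζ).1 ≤ (g η hη).1),
    (g ζ hζ).2 ≫ u.map (homOfLE hab) = x.map (homOfLE h) ≫ (g η hη).2

noncomputable def tin (d : Ordinal.{w}) (i : d.ToType) : Ordinal.{w} :=
  letI : IsWellOrder d.ToType (· < ·) := isWellOrder_lt
  typein (α := d.ToType) (· < ·) i

theorem tin_lt (d : Ordinal.{w}) (i : d.ToType) : tin d i < d := typein_lt_self i

theorem tin_enum (d : Ordinal.{w}) (o : Ordinal.{w}) (h : o < d) :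
    tin d (ToType.mk (o := d) ⟨o, h⟩) = o :=
  congrArg Subtype.val ((ToType.mk (o := d)).symm_apply_apply ⟨o, h⟩)

variable {u x}

def PartFam.R (p q : PartFam u x) : Prop :=
  p.dom ≤ q.dom ∧ ∀ (ζ : Idx μ) (hp : ζ.1 < p.dom) (hq : ζ.1 < q.dom), q.g ζ hq = p.g ζ hp

theorem PartFam.R.trans' {p q r : PartFam u x} (h₁ : p.R q) (h₂ : q.R r) : p.R r :=
  ⟨h₁.1.trans h₂.1, fun ζ hp hr => (h₂.2 ζ (lt_of_lt_of_le hp h₁.1) hr).trans (h₁.2 ζ hp _)⟩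

theorem PartFam.agree {p q : PartFam u x} (h : p.R q ∨ q.R p ∨ p = q) (ζ : Idx μ)
    (hp : ζ.1 < p.dom) (hq : ζ.1 < q.dom) : p.g ζ hp = q.g ζ hq := by
  rcases h with h | h | rfl
  · exact (h.2 ζ hp hq).symm
  · exact h.2 ζ hq hp
  · rfl

def PartFam.bot : PartFam u x where
  dom := 0
  hdom := by simp
  g := fun _ h => absurd h (by simp)
  mono := fun _ _ hζ _ _ => absurd hζ (by simp)
  coh := fun _ _ hζ _ _ _ => absurd hζ (by simp)


theorem umap_comp {a b c : Idx κ.ord} (h1 : a ≤ b) (h2 : b ≤ c) :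
    u.map (homOfLE h1) ≫ u.map (homOfLE h2) = u.map (homOfLE (h1.trans h2)) := by
  rw [← u.map_comp, homOfLE_comp]

theorem xmap_comp {a b c : Idx μ} (h1 : a ≤ b) (h2 : b ≤ c) :
    x.map (homOfLE h1) ≫ x.map (homOfLE h2) = x.map (homOfLE (h1.trans h2)) := by
  rw [← x.map_comp, homOfLE_comp]

theorem exists_ext (hC : AmalgProp C) (hκ : κ.IsRegular) (hu : IsFraisseSeq u)
    (hμ : μ ≤ κ.ord) (hx : IsContinuousSeq x) (p : PartFam u x) (hd : p.dom < μ) :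
    ∃ (aN : Idx κ.ord) (fN : x.obj ⟨p.dom, hd⟩ ⟶ u.obj aN),
      (∀ (ζ : Idx μ) (hζ : ζ.1 < p.dom), (p.g ζ hζ).1 ≤ aN) ∧
      (∀ (ζ : Idx μ) (hζ : ζ.1 < p.dom) (hab : (p.g ζ hζ).1 ≤ aN)
        (hle : ζ ≤ (⟨p.dom, hd⟩ : Idx μ)),
        (p.g ζ hζ).2 ≫ u.map (homOfLE hab) = x.map (homOfLE hle) ≫ fN) := by
  set ζ₀ : Idx μ := ⟨p.dom, hd⟩ with hζ₀
  rcases Ordinal.zero_or_succ_or_isSuccLimit p.dom with h0 | ⟨e, he⟩ | hlim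
  · -- dom = 0 : use cofinality (U)
    obtain ⟨ξ, ⟨f0⟩⟩ := hu.1 (x.obj ζ₀)
    exact ⟨ξ, f0, fun ζ hζ => absurd (h0 ▸ hζ) (by simp),
      fun ζ hζ _ _ => absurd (h0 ▸ hζ) (by simp)⟩
  · -- dom = succ e : amalgamate and use (A)
    have heP' : e < p.dom := by rw [← he]; exact Order.lt_succ e
    have heμ : e < μ := lt_trans heP' hd
    set eI : Idx μ := ⟨e, heμ⟩ with heI
    have heP : eI.1 < p.dom := heP'
    have hle0 : eI ≤ ζ₀ := Subtype.coe_le_coe.1 (le_of_lt heP')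
    obtain ⟨d, f', g', hsq⟩ :=
      hC (x.obj eI) (x.obj ζ₀) (u.obj (p.g eI heP).1) (x.map (homOfLE hle0)) (p.g eI heP).2
    obtain ⟨a2, hle2, g2, hg2⟩ := hu.2 (p.g eI heP).1 d g'
    refine ⟨a2, f' ≫ g2, ?_, ?_⟩
    · intro ζ hζ
      have hζe : ζ ≤ eI := Subtype.coe_le_coe.1 (Order.lt_succ_iff.1 (he ▸ hζ))
      exact (p.mono ζ eI hζ heP hζe).trans hle2
    · intro ζ hζ hab hle
      have hζe : ζ ≤ eI := Subtype.coe_le_coe.1 (Order.lt_succ_iff.1 (he ▸ hζ))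
      have h1 : (p.g ζ hζ).1 ≤ (p.g eI heP).1 := p.mono ζ eI hζ heP hζe
      calc (p.g ζ hζ).2 ≫ u.map (homOfLE hab)
          = (p.g ζ hζ).2 ≫ u.map (homOfLE h1) ≫ u.map (homOfLE hle2) := by
            rw [umap_comp]
        _ = (x.map (homOfLE hζe) ≫ (p.g eI heP).2) ≫ u.map (homOfLE hle2) := by
            rw [← Category.assoc, p.coh ζ eI hζ heP hζe h1]
        _ = x.map (homOfLE hζe) ≫ ((p.g eI heP).2 ≫ g') ≫ g2 := by
            rw [← hg2]; simp [Category.assoc]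
        _ = x.map (homOfLE hζe) ≫ (x.map (homOfLE hle0) ≫ f') ≫ g2 := by rw [← hsq]
        _ = x.map (homOfLE hle) ≫ f' ≫ g2 := by
            rw [← Category.assoc, ← Category.assoc, xmap_comp, Category.assoc]
  · -- dom limit : use regularity + continuity
    have hdκ : p.dom < κ.ord := lt_of_lt_of_le hd hμ
    set A : p.dom.ToType → Ordinal.{w} := fun i =>
      ((p.g ⟨tin p.dom i, lt_trans (tin_lt p.dom i) hd⟩ (tin_lt p.dom i)).1).1 with hA
    have hS : iSup A < κ.ord := by
      apply Ordinal.iSup_lt_ord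
      · rw [Cardinal.mk_toType, hκ.cof_eq]
        exact Cardinal.lt_ord.1 hdκ
      · intro i; exact ((p.g _ _).1).2
    set S : Idx κ.ord := ⟨iSup A, hS⟩ with hSdef
    have hbound : ∀ (ζ : Idx μ) (hζ : ζ.1 < p.dom), (p.g ζ hζ).1 ≤ S := by
      intro ζ hζ
      have key : ∀ (ζ' : Idx μ) (hζ' : ζ'.1 < p.dom), ζ' = ζ →
          ((p.g ζ' hζ').1).1 ≤ iSup A → ((p.g ζ hζ).1).1 ≤ iSup A := by
        rintro ζ' h' rfl h; exact h
      have ht : tin p.dom (ToType.mk (o := p.dom) ⟨ζ.1, hζ⟩) = ζ.1 := tin_enum p.dom ζ.1 hζ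
      exact Subtype.coe_le_coe.1 (key ⟨tin p.dom (ToType.mk (o := p.dom) ⟨ζ.1, hζ⟩),
        lt_trans (tin_lt p.dom _) hd⟩ (tin_lt p.dom _) (Subtype.ext ht)
        (Ordinal.le_iSup A (ToType.mk (o := p.dom) ⟨ζ.1, hζ⟩)))
    have hl' : Order.IsSuccLimit ζ₀.1 := hlim
    have hcompat : ∀ (ζ η : Idx μ) (hζ : ζ < ζ₀) (hη : η < ζ₀) (h : ζ ≤ η),
        x.map (homOfLE h) ≫
          ((p.g η (Subtype.coe_lt_coe.2 hη)).2 ≫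
            u.map (homOfLE (hbound η (Subtype.coe_lt_coe.2 hη)))) =
        (p.g ζ (Subtype.coe_lt_coe.2 hζ)).2 ≫
          u.map (homOfLE (hbound ζ (Subtype.coe_lt_coe.2 hζ))) := by
      intro ζ η hζ hη h
      rw [← Category.assoc,
        ← p.coh ζ η (Subtype.coe_lt_coe.2 hζ) (Subtype.coe_lt_coe.2 hη) h
          (p.mono ζ η (Subtype.coe_lt_coe.2 hζ) (Subtype.coe_lt_coe.2 hη) h),
        Category.assoc, umap_comp]
    obtain ⟨fN, hfN, -⟩ := hx ζ₀ hl' (u.obj S)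
      (fun ζ hζ => (p.g ζ (Subtype.coe_lt_coe.2 hζ)).2 ≫
        u.map (homOfLE (hbound ζ (Subtype.coe_lt_coe.2 hζ)))) hcompat
    refine ⟨S, fN, hbound, ?_⟩
    intro ζ hζ hab hle
    exact (hfN ζ (Subtype.coe_lt_coe.1 hζ)).symm

theorem exists_gt (hC : AmalgProp C) (hκ : κ.IsRegular) (hu : IsFraisseSeq u)
    (hμ : μ ≤ κ.ord) (hx : IsContinuousSeq x) (p : PartFam u x) (hd : p.dom < μ) :
    ∃ q : PartFam u x, p.R q ∧ p.dom < q.dom := by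
  obtain ⟨aN, fN, hmono, hcoh⟩ := exists_ext hC hκ hu hμ hx p hd
  have hle1 : ∀ (ζ : Idx μ), ζ.1 < Order.succ p.dom → ζ ≤ (⟨p.dom, hd⟩ : Idx μ) :=
    fun ζ hζ => Subtype.coe_le_coe.1 (Order.lt_succ_iff.1 hζ)
  classical
  refine ⟨{
    dom := Order.succ p.dom
    hdom := Order.succ_le_of_lt hd
    g := fun ζ hζ => if h' : ζ.1 < p.dom then p.g ζ h'
      else ⟨aN, x.map (homOfLE (hle1 ζ hζ)) ≫ fN⟩
    mono := ?_
    coh := ?_ }, ⟨(Order.lt_succ p.dom).le, ?_⟩, ?_⟩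
  · intro ζ η hζ hη h
    by_cases hζ' : ζ.1 < p.dom <;> by_cases hη' : η.1 < p.dom
    · rw [dif_pos hζ', dif_pos hη']; exact p.mono ζ η hζ' hη' h
    · rw [dif_pos hζ', dif_neg hη']; exact hmono ζ hζ'
    · exact absurd (lt_of_le_of_lt (show ζ.1 ≤ η.1 from h) hη') hζ'
    · rw [dif_neg hζ', dif_neg hη']
  · intro ζ η hζ hη h
    by_cases hζ' : ζ.1 < p.dom <;> by_cases hη' : η.1 < p.dom
    · have e1 : (if h' : ζ.1 < p.dom then p.g ζ h'
          else ⟨aN, x.map (homOfLE (hle1 ζ hζ)) ≫ fN⟩) = p.g ζ hζ' := dif_pos hζ'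
      have e2 : (if h' : η.1 < p.dom then p.g η h'
          else ⟨aN, x.map (homOfLE (hle1 η hη)) ≫ fN⟩) = p.g η hη' := dif_pos hη'
      rw [e1, e2]; exact p.coh ζ η hζ' hη' h
    · have e1 : (if h' : ζ.1 < p.dom then p.g ζ h'
          else ⟨aN, x.map (homOfLE (hle1 ζ hζ)) ≫ fN⟩) = p.g ζ hζ' := dif_pos hζ'
      have e2 : (if h' : η.1 < p.dom then p.g η h'
          else ⟨aN, x.map (homOfLE (hle1 η hη)) ≫ fN⟩) =
          ⟨aN, x.map (homOfLE (hle1 η hη)) ≫ fN⟩ := dif_neg hη'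
      rw [e1, e2]
      intro hab
      dsimp only
      rw [hcoh ζ hζ' hab (hle1 ζ hζ), ← Category.assoc, xmap_comp]
    · exact absurd (lt_of_le_of_lt (show ζ.1 ≤ η.1 from h) hη') hζ'
    · have e1 : (if h' : ζ.1 < p.dom then p.g ζ h'
          else ⟨aN, x.map (homOfLE (hle1 ζ hζ)) ≫ fN⟩) =
          ⟨aN, x.map (homOfLE (hle1 ζ hζ)) ≫ fN⟩ := dif_neg hζ'
      have e2 : (if h' : η.1 < p.dom then p.g η h'
          else ⟨aN, x.map (homOfLE (hle1 η hη)) ≫ fN⟩) =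
          ⟨aN, x.map (homOfLE (hle1 η hη)) ≫ fN⟩ := dif_neg hη'
      rw [e1, e2]
      intro hab
      dsimp only
      rw [show u.map (homOfLE hab) = 𝟙 _ from by
            rw [show homOfLE hab = 𝟙 aN from rfl, u.map_id],
        Category.comp_id, ← Category.assoc, xmap_comp]
  · intro ζ hp hq
    exact dif_pos hp
  · exact Order.lt_succ p.dom


theorem chain_ub {c : Set (PartFam u x)} (hc : IsChain PartFam.R c) (hne : c.Nonempty) :
    ∃ ub, ∀ p ∈ c, p.R ub := by
  classical
  have comp : ∀ p ∈ c, ∀ q ∈ c, p.R q ∨ q.R p ∨ p = q := by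
    intro p hp q hq
    by_cases h : p = q
    · exact Or.inr (Or.inr h)
    · rcases hc hp hq h with h' | h'
      exacts [Or.inl h', Or.inr (Or.inl h')]
  have hbddD : BddAbove (PartFam.dom '' c) :=
    ⟨μ, fun d hd => by obtain ⟨p, hp, rfl⟩ := hd; exact p.hdom⟩
  have hDμ : sSup (PartFam.dom '' c) ≤ μ :=
    csSup_le (hne.image _) (fun d hd => by obtain ⟨p, hp, rfl⟩ := hd; exact p.hdom)
  have hex : ∀ ζ : Idx μ, ζ.1 < sSup (PartFam.dom '' c) → ∃ q, q ∈ c ∧ ζ.1 < q.dom := by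
    intro ζ hζ
    obtain ⟨d, hd, hlt⟩ := (lt_csSup_iff hbddD (hne.image _)).1 hζ
    obtain ⟨p, hp, rfl⟩ := hd
    exact ⟨p, hp, hlt⟩
  choose Q hQc hQd using hex
  have pair : ∀ (ζ η : Idx μ) (hζ : ζ.1 < sSup (PartFam.dom '' c))
      (hη : η.1 < sSup (PartFam.dom '' c)),
      ∃ (q : PartFam u x) (hζq : ζ.1 < q.dom) (hηq : η.1 < q.dom),
        (Q ζ hζ).g ζ (hQd ζ hζ) = q.g ζ hζq ∧ (Q η hη).g η (hQd η hη) = q.g η hηq := by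
    intro ζ η hζ hη
    rcases comp _ (hQc ζ hζ) _ (hQc η hη) with h | h | h
    · exact ⟨Q η hη, lt_of_lt_of_le (hQd ζ hζ) h.1, hQd η hη,
        PartFam.agree (Or.inl h) ζ _ _, rfl⟩
    · exact ⟨Q ζ hζ, hQd ζ hζ, lt_of_lt_of_le (hQd η hη) h.1,
        rfl, PartFam.agree (Or.inl h) η _ _⟩
    · exact ⟨Q ζ hζ, hQd ζ hζ, h ▸ hQd η hη, rfl,
        PartFam.agree (Or.inr (Or.inr h.symm)) η _ _⟩
  refine ⟨⟨sSup (PartFam.dom '' c), hDμ,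
      fun ζ hζ => (Q ζ hζ).g ζ (hQd ζ hζ), ?_, ?_⟩, ?_⟩
  · intro ζ η hζ hη h
    obtain ⟨q, h1, h2, e1, e2⟩ := pair ζ η hζ hη
    rw [e1, e2]
    exact q.mono ζ η h1 h2 h
  · intro ζ η hζ hη h
    obtain ⟨q, h1, h2, e1, e2⟩ := pair ζ η hζ hη
    rw [e1, e2]
    exact q.coh ζ η h1 h2 h
  · intro p hp
    refine ⟨le_csSup hbddD ⟨p, hp, rfl⟩, ?_⟩
    intro ζ hpd hqd
    exact PartFam.agree (comp _ (hQc ζ hqd) _ hp) ζ _ _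

theorem total_family (hC : AmalgProp C) (hκ : κ.IsRegular) (hu : IsFraisseSeq u)
    (hμ : μ ≤ κ.ord) (hx : IsContinuousSeq x) :
    ∃ m : PartFam u x, m.dom = μ := by
  haveI : Nonempty (PartFam u x) := ⟨PartFam.bot⟩
  obtain ⟨m, hm⟩ := exists_maximal_of_nonempty_chains_bounded (r := PartFam.R (u := u) (x := x))
    (fun c hc hne => chain_ub hc hne) (fun h1 h2 => h1.trans' h2)
  refine ⟨m, ?_⟩
  by_contra hne
  have hlt : m.dom < μ := lt_of_le_of_ne m.hdom hne
  obtain ⟨q, hR, hq⟩ := exists_gt hC hκ hu hμ hx m hlt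
  exact absurd ((hm q hR).1) (not_le_of_gt hq)

end Aux

/-- if `C` has the amalgamation property and `u` is a Fraïssé sequence of
regular length `κ` in `C`, then every continuous sequence of length `≤ κ` admits a morphism
of sequences into `u`. -/
theorem exists_seqHom_of_continuous_seq {C : Type u} [Category.{v} C]
    (hC : AmalgProp C) (κ : Cardinal.{w}) (hκ : κ.IsRegular)
    (u : Idx κ.ord ⥤ C) (hu : IsFraisseSeq u)
    (μ : Ordinal.{w}) (hμ : μ ≤ κ.ord) (x : Idx μ ⥤ C) (hx : IsContinuousSeq x) :
    ∃ (α : Idx μ → Idx κ.ord) (hα : Monotone α)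
      (f : ∀ ξ : Idx μ, x.obj ξ ⟶ u.obj (α ξ)),
      ∀ (ξ η : Idx μ) (h : ξ ≤ η),
        f ξ ≫ u.map (homOfLE (hα h)) = x.map (homOfLE h) ≫ f η := by
  obtain ⟨m, hdom⟩ := total_family (u := u) (x := x) hC hκ hu hμ hx
  have hall : ∀ ζ : Idx μ, ζ.1 < m.dom := fun ζ => by rw [hdom]; exact ζ.2
  exact ⟨fun ζ => (m.g ζ (hall ζ)).1,
    fun ζ η h => m.mono ζ η (hall ζ) (hall η) h,
    fun ζ => (m.g ζ (hall ζ)).2,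
    fun ζ η h => m.coh ζ η (hall ζ) (hall η) h (m.mono ζ η (hall ζ) (hall η) h)⟩
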